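/- arXiv:0912.0213 — 2 statements merged into one kernel-verified Lean document; each statement's English description precedes it below -/
import Mathlib

section
/- Let H be a bimonoid in a braided monoidal category, P a right H-module coalgebra with action ρ : P ⊗ H ⟶ P, B a comonoid, and π : P ⟶ B a comonoid morphism satisfying π ∘ ρ = π ∘ (id_P ⊗ ε_H) (up to unitor). Assume the cotensor product P□_B P exists, with equalizer inclusion ι : P□_B P ⟶ P ⊗ P, and that the functor − ⊗ H (tensoring on the right by H) preserves this equalizer. Then there exists a unique morphism ξ : (P□_B P) ⊗ H ⟶ P□_B P such that ι ∘ ξ = (id_P ⊗ ρ) ∘ (ι ⊗ id_H) (with associators inserted). -/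
open CategoryTheory CategoryTheory.Limits MonoidalCategory

universe v u

variable {𝓒 : Type u} [Category.{v} 𝓒] [MonoidalCategory 𝓒]

/-- The first of the two morphisms `P ⊗ P ⟶ P ⊗ (B ⊗ P)` defining the cotensor product
`P □_B P` of a comonoid morphism `π : P ⟶ B`: `(id_P ⊗ π ⊗ id_P) ∘ (Δ_P ⊗ id_P)`. -/
def cotensorLeg₁ (P B : Comon 𝓒) (π : P ⟶ B) : P.X ⊗ P.X ⟶ P.X ⊗ (B.X ⊗ P.X) :=
  (ComonObj.comul (X := P.X) ▷ P.X) ≫ (α_ P.X P.X P.X).hom ≫ (P.X ◁ (π.hom ▷ P.X))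

/-- The second of the two morphisms `P ⊗ P ⟶ P ⊗ (B ⊗ P)` defining the cotensor product
`P □_B P`: `(id_P ⊗ π ⊗ id_P) ∘ (id_P ⊗ Δ_P)`. -/
def cotensorLeg₂ (P B : Comon 𝓒) (π : P ⟶ B) : P.X ⊗ P.X ⟶ P.X ⊗ (B.X ⊗ P.X) :=
  (P.X ◁ ComonObj.comul (X := P.X)) ≫ (P.X ◁ (π.hom ▷ P.X))

/-- Auxiliary coherence-plus-braiding computation: composing `Δ ⊗ Δh` with `tensorμ` and then
deleting the first `h`-output via `εh` is just `Δ ▷ h` up to an associator. -/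
lemma cotensor_aux [BraidedCategory 𝓒] (p h : 𝓒) (Δ : p ⟶ p ⊗ p) (Δh : h ⟶ h ⊗ h)
    (εh : h ⟶ 𝟙_ 𝓒) (hcc : Δh ≫ (εh ▷ h) = (λ_ h).inv) :
    (Δ ⊗ₘ Δh) ≫ tensorμ p p h h ≫ (((p ◁ εh) ≫ (ρ_ p).hom) ▷ (p ⊗ h))
      = (Δ ▷ h) ≫ (α_ p p h).hom := by
  have inner : p ◁ Δh ≫ (α_ p h h).inv ≫ ((β_ p h).hom ▷ h) ≫ ((εh ▷ p) ▷ h) ≫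
      (α_ (𝟙_ 𝓒) p h).hom ≫ (λ_ (p ⊗ h)).hom = 𝟙 (p ⊗ h) := by
    rw [← comp_whiskerRight_assoc, ← BraidedCategory.braiding_naturality_right, comp_whiskerRight_assoc,
      ← associator_inv_naturality_middle_assoc, ← MonoidalCategory.whiskerLeft_comp_assoc, hcc,
      braiding_tensorUnit_right]
    monoidal
  calc (Δ ⊗ₘ Δh) ≫ tensorμ p p h h ≫ (((p ◁ εh) ≫ (ρ_ p).hom) ▷ (p ⊗ h))
      = (Δ ▷ h) ≫ (α_ p p h).hom ≫ p ◁ (p ◁ Δh ≫ (α_ p h h).inv ≫ ((β_ p h).hom ▷ h) ≫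
          ((εh ▷ p) ▷ h) ≫ (α_ (𝟙_ 𝓒) p h).hom ≫ (λ_ (p ⊗ h)).hom) := by
        simp [tensorμ, MonoidalCategory.tensorHom_def]
    _ = (Δ ▷ h) ≫ (α_ p p h).hom := by rw [inner]; simp

/-- Variant of `cotensor_aux` with an extra morphism `πh` on the first leg and an action `ρ`
on the second leg. -/
lemma cotensor_aux' [BraidedCategory 𝓒] (p h b : 𝓒) (Δ : p ⟶ p ⊗ p) (Δh : h ⟶ h ⊗ h)
    (εh : h ⟶ 𝟙_ 𝓒) (πh : p ⟶ b) (ρ : p ⊗ h ⟶ p) (hcc : Δh ≫ (εh ▷ h) = (λ_ h).inv) :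
    (Δ ⊗ₘ Δh) ≫ tensorμ p p h h ≫ (((p ◁ εh) ≫ (ρ_ p).hom ≫ πh) ⊗ₘ ρ)
      = (Δ ▷ h) ≫ ((πh ▷ p) ▷ h) ≫ (α_ b p h).hom ≫ (b ◁ ρ) := by
  calc (Δ ⊗ₘ Δh) ≫ tensorμ p p h h ≫ (((p ◁ εh) ≫ (ρ_ p).hom ≫ πh) ⊗ₘ ρ)
      = (Δ ⊗ₘ Δh) ≫ (tensorμ p p h h ≫ (((p ◁ εh) ≫ (ρ_ p).hom) ▷ (p ⊗ h))) ≫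
          (πh ▷ (p ⊗ h)) ≫ (b ◁ ρ) := by
        simp [MonoidalCategory.tensorHom_def]
    _ = (Δ ▷ h) ≫ ((πh ▷ p) ▷ h) ≫ (α_ b p h).hom ≫ (b ◁ ρ) := by
        rw [← Category.assoc, ← Category.assoc, cotensor_aux p h Δ Δh εh hcc]
        simp only [Category.assoc]
        rw [associator_naturality_left_assoc]

/-- `H` a bimonoid in a braided monoidal category, `P` a right `H`-module
coalgebra with action `ρ`, `B` a comonoid, `π : P ⟶ B` a comonoid morphism with
`π ∘ ρ = π ∘ (id_P ⊗ ε_H)` (up to unitor).  If the cotensor product `P □_B P` exists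
(equalizer inclusion `ι`) and `− ⊗ H` preserves this equalizer, then there is a unique
morphism `ξ : (P □_B P) ⊗ H ⟶ P □_B P` with `ι ∘ ξ = (id_P ⊗ ρ) ∘ (ι ⊗ id_H)`. -/
theorem exists_unique_cotensor_action [BraidedCategory 𝓒]
    (H : Bimon 𝓒) (P B : Comon 𝓒) (ρ : P.X ⊗ H.X.X ⟶ P.X)
    -- `ρ` is a unital, associative action of the monoid `H`:
    (hact_one : (P.X ◁ MonObj.one (X := H.X.X)) ≫ ρ = (ρ_ P.X).hom)
    (hact_assoc : (ρ ▷ H.X.X) ≫ ρ = (α_ P.X H.X.X H.X.X).hom ≫ (P.X ◁ MonObj.mul (X := H.X.X)) ≫ ρ)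
    -- `ρ` is a comonoid morphism from the tensor-product comonoid `P ⊗ H` to `P`:
    (hρ_comul : ρ ≫ ComonObj.comul (X := P.X) =
      ((ComonObj.comul (X := P.X) ⊗ₘ (ComonObj.comul (self := H.comon)).hom) ≫ tensorμ P.X P.X H.X.X H.X.X) ≫ (ρ ⊗ₘ ρ))
    (hρ_counit : ρ ≫ ComonObj.counit (X := P.X) = (ComonObj.counit (X := P.X) ⊗ₘ (ComonObj.counit (self := H.comon)).hom) ≫ (λ_ (𝟙_ 𝓒)).hom)
    (π : P ⟶ B)
    (hπ : ρ ≫ π.hom = (P.X ◁ (ComonObj.counit (self := H.comon)).hom) ≫ (ρ_ P.X).hom ≫ π.hom)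
    (Q : 𝓒) (ι : Q ⟶ P.X ⊗ P.X)
    (hι : ι ≫ cotensorLeg₁ P B π = ι ≫ cotensorLeg₂ P B π)
    (hlim : IsLimit (Fork.ofι ι hι))
    [PreservesLimit (parallelPair (cotensorLeg₁ P B π) (cotensorLeg₂ P B π))
      (tensorRight H.X.X)] :
    ∃! ξ : Q ⊗ H.X.X ⟶ Q,
      ξ ≫ ι = (ι ▷ H.X.X) ≫ (α_ P.X P.X H.X.X).hom ≫ (P.X ◁ ρ) := by
  -- counit law of `H` in `𝓒`
  have hcc : (ComonObj.comul (self := H.comon)).hom ≫ ((ComonObj.counit (self := H.comon)).hom ▷ H.X.X) = (λ_ H.X.X).inv := by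
    exact congrArg (fun f => f.hom) (ComonObj.counit_comul (self := H.comon) _)
  -- `ρ` is compatible with comultiplication followed by `π` on the first leg
  have inner : ρ ≫ ComonObj.comul (X := P.X) ≫ (π.hom ▷ P.X) =
      (ComonObj.comul (X := P.X) ▷ H.X.X) ≫ ((π.hom ▷ P.X) ▷ H.X.X) ≫ (α_ B.X P.X H.X.X).hom ≫ (B.X ◁ ρ) := by
    rw [← Category.assoc, hρ_comul]
    calc (((ComonObj.comul (X := P.X) ⊗ₘ (ComonObj.comul (self := H.comon)).hom) ≫ tensorμ P.X P.X H.X.X H.X.X) ≫ (ρ ⊗ₘ ρ)) ≫ (π.hom ▷ P.X)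
        = (ComonObj.comul (X := P.X) ⊗ₘ (ComonObj.comul (self := H.comon)).hom) ≫ tensorμ P.X P.X H.X.X H.X.X ≫ ((ρ ≫ π.hom) ⊗ₘ ρ) := by
          simp only [Category.assoc]
          rw [← tensorHom_id, tensorHom_comp_tensorHom, Category.comp_id]
      _ = (ComonObj.comul (X := P.X) ⊗ₘ (ComonObj.comul (self := H.comon)).hom) ≫ tensorμ P.X P.X H.X.X H.X.X ≫
            (((P.X ◁ (ComonObj.counit (self := H.comon)).hom) ≫ (ρ_ P.X).hom ≫ π.hom) ⊗ₘ ρ) := by rw [hπ]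
      _ = (ComonObj.comul (X := P.X) ▷ H.X.X) ≫ ((π.hom ▷ P.X) ▷ H.X.X) ≫ (α_ B.X P.X H.X.X).hom ≫ (B.X ◁ ρ) := by
          rw [cotensor_aux' P.X H.X.X B.X (ComonObj.comul (X := P.X)) (ComonObj.comul (self := H.comon)).hom (ComonObj.counit (self := H.comon)).hom π.hom ρ hcc]
  -- the candidate morphism equalizes the two legs of the cotensor product
  have key : ((ι ▷ H.X.X) ≫ (α_ P.X P.X H.X.X).hom ≫ (P.X ◁ ρ)) ≫ cotensorLeg₁ P B π =
      ((ι ▷ H.X.X) ≫ (α_ P.X P.X H.X.X).hom ≫ (P.X ◁ ρ)) ≫ cotensorLeg₂ P B π := by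
    have L : ((ι ▷ H.X.X) ≫ (α_ P.X P.X H.X.X).hom ≫ (P.X ◁ ρ)) ≫ cotensorLeg₁ P B π =
        ((ι ≫ cotensorLeg₁ P B π) ▷ H.X.X) ≫ (α_ P.X (B.X ⊗ P.X) H.X.X).hom ≫
          (P.X ◁ (α_ B.X P.X H.X.X).hom) ≫ (P.X ◁ (B.X ◁ ρ)) := by
      dsimp only [cotensorLeg₁]
      simp only [comp_whiskerRight, Category.assoc]
      congr 1
      rw [whisker_exchange_assoc, associator_naturality_right_assoc,
        ← MonoidalCategory.whiskerLeft_comp, whisker_exchange,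
        MonoidalCategory.whiskerLeft_comp]
      monoidal
    have R : ((ι ▷ H.X.X) ≫ (α_ P.X P.X H.X.X).hom ≫ (P.X ◁ ρ)) ≫ cotensorLeg₂ P B π =
        ((ι ≫ cotensorLeg₂ P B π) ▷ H.X.X) ≫ (α_ P.X (B.X ⊗ P.X) H.X.X).hom ≫
          (P.X ◁ (α_ B.X P.X H.X.X).hom) ≫ (P.X ◁ (B.X ◁ ρ)) := by
      dsimp only [cotensorLeg₂]
      simp only [comp_whiskerRight, Category.assoc]
      congr 1
      rw [← MonoidalCategory.whiskerLeft_comp, ← MonoidalCategory.whiskerLeft_comp, inner]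
      simp only [MonoidalCategory.whiskerLeft_comp, Category.assoc]
      monoidal
    rw [L, hι, ← R]
  obtain ⟨ξ, hξ⟩ := Fork.IsLimit.lift' hlim _ key
  refine ⟨ξ, by simpa using hξ, fun y hy => Fork.IsLimit.hom_ext hlim ?_⟩
  simpa using hy.trans (by simpa using hξ.symm)
end

section
/- Let H be a bimonoid in a braided monoidal category, P a right H-module coalgebra with action ρ : P ⊗ H ⟶ P, B a comonoid, and π : P ⟶ B a comonoid morphism satisfying π ∘ ρ = π ∘ (id_P ⊗ ε_H) (up to unitor). Assume the cotensor product P□_B P exists, with equalizer inclusion ι : P□_B P ⟶ P ⊗ P, and that the functor − ⊗ H preserves this equalizer. Let can : P ⊗ H ⟶ P□_B P be the unique morphism with ι ∘ can = (id_P ⊗ ρ) ∘ (Δ_P ⊗ id_H), and let ξ : (P□_B P) ⊗ H ⟶ P□_B P be the unique morphism with ι ∘ ξ = (id_P ⊗ ρ) ∘ (ι ⊗ id_H). Then can is right H-linear: can ∘ (id_P ⊗ m_H) = ξ ∘ (can ⊗ id_H) as morphisms P ⊗ H ⊗ H ⟶ P□_B P (with associators inserted). -/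
open CategoryTheory CategoryTheory.Limits MonoidalCategory

universe v u

variable {𝓒 : Type u} [Category.{v} 𝓒] [MonoidalCategory 𝓒]

/-- `H` a bimonoid in a braided monoidal category, `P` a right `H`-module
coalgebra with action `ρ`, `B` a comonoid, `π : P ⟶ B` a comonoid morphism with
`π ∘ ρ = π ∘ (id_P ⊗ ε_H)`.  Assume the cotensor product `P □_B P` exists (equalizer
inclusion `ι`) and `− ⊗ H` preserves this equalizer.  If `can : P ⊗ H ⟶ P □_B P` is
the unique morphism with `ι ∘ can = (id_P ⊗ ρ) ∘ (Δ_P ⊗ id_H)` and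
`ξ : (P □_B P) ⊗ H ⟶ P □_B P` the unique morphism with
`ι ∘ ξ = (id_P ⊗ ρ) ∘ (ι ⊗ id_H)`, then `can` is right `H`-linear:
`can ∘ (id_P ⊗ m_H) = ξ ∘ (can ⊗ id_H)` (with associators inserted). -/
theorem can_right_linear [BraidedCategory 𝓒]
    (H : Bimon 𝓒) (P B : Comon 𝓒) (ρ : P.X ⊗ H.X.X ⟶ P.X)
    -- `ρ` is a unital, associative action of the monoid `H`:
    (hact_one : (P.X ◁ MonObj.one (X := H.X.X)) ≫ ρ = (ρ_ P.X).hom)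
    (hact_assoc : (ρ ▷ H.X.X) ≫ ρ = (α_ P.X H.X.X H.X.X).hom ≫ (P.X ◁ MonObj.mul (X := H.X.X)) ≫ ρ)
    -- `ρ` is a comonoid morphism from the tensor-product comonoid `P ⊗ H` to `P`:
    (hρ_comul : ρ ≫ ComonObj.comul (X := P.X) =
      ((ComonObj.comul (X := P.X) ⊗ₘ (@ComonObj.comul _ _ _ H.X H.comon).hom) ≫ tensorμ P.X P.X H.X.X H.X.X) ≫ (ρ ⊗ₘ ρ))
    (hρ_counit : ρ ≫ ComonObj.counit (X := P.X) = (ComonObj.counit (X := P.X) ⊗ₘ (@ComonObj.counit _ _ _ H.X H.comon).hom) ≫ (λ_ (𝟙_ 𝓒)).hom)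
    (π : P ⟶ B)
    (hπ : ρ ≫ π.hom = (P.X ◁ (@ComonObj.counit _ _ _ H.X H.comon).hom) ≫ (ρ_ P.X).hom ≫ π.hom)
    (Q : 𝓒) (ι : Q ⟶ P.X ⊗ P.X)
    (hι : ι ≫ cotensorLeg₁ P B π = ι ≫ cotensorLeg₂ P B π)
    (hlim : IsLimit (Fork.ofι ι hι))
    [PreservesLimit (parallelPair (cotensorLeg₁ P B π) (cotensorLeg₂ P B π))
      (tensorRight H.X.X)]
    (can : P.X ⊗ H.X.X ⟶ Q)
    (hcan : can ≫ ι = (ComonObj.comul (X := P.X) ▷ H.X.X) ≫ (α_ P.X P.X H.X.X).hom ≫ (P.X ◁ ρ))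
    (ξ : Q ⊗ H.X.X ⟶ Q)
    (hξ : ξ ≫ ι = (ι ▷ H.X.X) ≫ (α_ P.X P.X H.X.X).hom ≫ (P.X ◁ ρ)) :
    (α_ P.X H.X.X H.X.X).hom ≫ (P.X ◁ MonObj.mul (X := H.X.X)) ≫ can = (can ▷ H.X.X) ≫ ξ := by
  apply Fork.IsLimit.hom_ext hlim
  simp only [Fork.ι_ofι]
  simp only [Category.assoc, hcan, hξ]
  rw [← comp_whiskerRight_assoc, hcan]
  simp only [comp_whiskerRight, Category.assoc, associator_naturality_middle_assoc,
    whisker_exchange_assoc]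
  rw [← MonoidalCategory.whiskerLeft_comp, hact_assoc]
  simp only [MonoidalCategory.whiskerLeft_comp, whisker_assoc,
    ← associator_naturality_middle_assoc, ← associator_naturality_left_assoc,
    Category.assoc, pentagon_assoc]
  monoidal
end
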